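/- Let H be a Hilbert space with energy norm |||·|||, X_j a finite-dimensional subspace, φ*_j ∈ X_j the Galerkin projection of φ* ∈ H, and let φ_{j,k} ∈ X_j satisfy the PCG contraction |||φ*_j − φ_{j,k+1}||| ≤ q|||φ*_j − φ_{j,k}||| with 0 < q < 1. Suppose increments satisfy the stopping criterion violation |||φ_{j,k+1} − φ_{j,k}||| > λ η_j(φ_{j,k+1}) (i.e., k+1 < k̲), the estimator stability (A1), and reliability (A3). Then for suitable constants 0 < μ, ε < 1 depending only on q, λ, C_stb, C_rel, the weighted quasi-error Δ_{j,k} := μη_j(φ_{j,k})² + |||φ* − φ_{j,k}|||² contracts: Δ_{j,k+1} ≤ q_ctr Δ_{j,k} with some 0 < q_ctr < 1 depending only on q, λ, C_stb, C_rel. -/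

import Mathlib

set_option maxHeartbeats 1600000

/-- Purely scalar core of the contraction estimate. -/
lemma stmt_18_scalar (q lam Cstb Crel μ δ e eb d r ηa ηb : ℝ)
    (hμ0 : 0 < μ) (hδ0 : 0 < δ) (hδ1 : δ < 1) (hlam : 0 < lam)
    (he : 0 ≤ e) (heb : 0 ≤ eb) (hηa : 0 ≤ ηa) (hηb : 0 ≤ ηb)
    (hpyth : eb ^ 2 + d ^ 2 = e ^ 2)
    (hcon : eb ≤ q * e)
    (hstop : lam * ηb ≤ d)
    (hrel : r ^ 2 ≤ 2 * Crel ^ 2 * ηb ^ 2 + 2 * Crel ^ 2 * Cstb ^ 2 * eb ^ 2)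
    (hcoef : μ + q ^ 2 * lam ^ 2 +
        δ * (2 * Crel ^ 2 + 2 * Crel ^ 2 * Cstb ^ 2 * q ^ 2 * lam ^ 2 + lam ^ 2) ≤ lam ^ 2) :
    μ * ηb ^ 2 + (r ^ 2 + eb ^ 2) ≤ (1 - δ) * (μ * ηa ^ 2 + (r ^ 2 + e ^ 2)) := by
  have hl2 : 0 < lam ^ 2 := by positivity
  -- lam^2 ηb^2 ≤ d^2 ≤ e^2
  have hA : lam ^ 2 * ηb ^ 2 ≤ e ^ 2 := by
    nlinarith [mul_self_le_mul_self (by positivity : (0:ℝ) ≤ lam * ηb) hstop,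
      sq_nonneg eb]
  -- eb^2 ≤ q^2 e^2
  have hB : eb ^ 2 ≤ q ^ 2 * e ^ 2 := by
    nlinarith [mul_self_le_mul_self heb hcon]
  -- key: lam^2 * (μ ηb^2 + δ r^2 + eb^2) ≤ (1-δ) * lam^2 * e^2
  have hkey : lam ^ 2 * (μ * ηb ^ 2 + δ * r ^ 2 + eb ^ 2) ≤ (1 - δ) * (lam ^ 2 * e ^ 2) := by
    have h1 : lam ^ 2 * (μ * ηb ^ 2) ≤ μ * e ^ 2 := by nlinarith [hA]
    have h2 : lam ^ 2 * (δ * r ^ 2) ≤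
        δ * (2 * Crel ^ 2 * e ^ 2 + 2 * Crel ^ 2 * Cstb ^ 2 * q ^ 2 * lam ^ 2 * e ^ 2) := by
      have hr2 : lam ^ 2 * r ^ 2 ≤
          2 * Crel ^ 2 * (lam ^ 2 * ηb ^ 2) + 2 * Crel ^ 2 * Cstb ^ 2 * (lam ^ 2 * eb ^ 2) := by
        nlinarith [hrel]
      have t1 := mul_le_mul_of_nonneg_left hA (by positivity : (0:ℝ) ≤ 2 * Crel ^ 2)
      have t2 := mul_le_mul_of_nonneg_left
        (mul_le_mul_of_nonneg_left hB hl2.le)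
        (by positivity : (0:ℝ) ≤ 2 * Crel ^ 2 * Cstb ^ 2)
      have hr3 : lam ^ 2 * r ^ 2 ≤
          2 * Crel ^ 2 * e ^ 2 + 2 * Crel ^ 2 * Cstb ^ 2 * q ^ 2 * lam ^ 2 * e ^ 2 := by
        nlinarith [t1, t2]
      have := mul_le_mul_of_nonneg_left hr3 hδ0.le
      nlinarith [this]
    have h3 : lam ^ 2 * eb ^ 2 ≤ q ^ 2 * lam ^ 2 * e ^ 2 := by nlinarith [hB]
    have hce := mul_le_mul_of_nonneg_right hcoef (sq_nonneg e)
    linarith [h1, h2, h3, hce]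
  have hgoal : μ * ηb ^ 2 + δ * r ^ 2 + eb ^ 2 ≤ (1 - δ) * e ^ 2 := by
    have := le_of_mul_le_mul_left (by linarith [hkey] :
      lam ^ 2 * (μ * ηb ^ 2 + δ * r ^ 2 + eb ^ 2) ≤ lam ^ 2 * ((1 - δ) * e ^ 2)) hl2
    linarith
  nlinarith [mul_nonneg (mul_nonneg (by linarith : (0:ℝ) ≤ 1 - δ) hμ0.le) (sq_nonneg ηa)]

theorem stmt_18 (q lam Cstb Crel : ℝ)
    (hq0 : 0 < q) (hq1 : q < 1) (hlam : 0 < lam) (hCstb : 0 < Cstb) (hCrel : 0 < Crel) :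
    ∃ μ qctr : ℝ, 0 < μ ∧ μ < 1 ∧ 0 < qctr ∧ qctr < 1 ∧
      ∀ (H : Type) [NormedAddCommGroup H] [InnerProductSpace ℝ H]
        (Xj : Submodule ℝ H) (φstar φj a b : H) (ηa ηb ηstar : ℝ),
        φj ∈ Xj → a ∈ Xj → b ∈ Xj →
        -- Galerkin Pythagoras identity
        (∀ ψ ∈ Xj, ‖φstar - φj‖ ^ 2 + ‖φj - ψ‖ ^ 2 = ‖φstar - ψ‖ ^ 2) →
        -- PCG Pythagoras identity
        ‖φj - b‖ ^ 2 + ‖b - a‖ ^ 2 = ‖φj - a‖ ^ 2 →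
        -- PCG contraction
        ‖φj - b‖ ≤ q * ‖φj - a‖ →
        0 ≤ ηa → 0 ≤ ηb → 0 ≤ ηstar →
        -- failure of the stopping criterion, i.e. k+1 < k̲(j)
        lam * ηb < ‖b - a‖ →
        -- stability (A1)
        |ηb - ηa| ≤ Cstb * ‖b - a‖ →
        |ηstar - ηa| ≤ Cstb * ‖φj - a‖ →
        |ηstar - ηb| ≤ Cstb * ‖φj - b‖ →
        -- reliability (A3)
        ‖φstar - φj‖ ≤ Crel * ηstar →
        μ * ηb ^ 2 + ‖φstar - b‖ ^ 2 ≤ qctr * (μ * ηa ^ 2 + ‖φstar - a‖ ^ 2) := by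
  set K : ℝ := lam ^ 2 + 2 * Crel ^ 2 + 2 * Crel ^ 2 * Cstb ^ 2 * q ^ 2 * lam ^ 2 with hK
  have hK0 : 0 < K := by positivity
  have hq2 : 0 < 1 - q ^ 2 := by nlinarith
  set μ : ℝ := min (1/2) (lam ^ 2 * (1 - q ^ 2) / 2) with hμdef
  set δ : ℝ := lam ^ 2 * (1 - q ^ 2) / (2 * K) with hδdef
  have hμ0 : 0 < μ := lt_min (by norm_num) (by positivity)
  have hμ1 : μ < 1 := lt_of_le_of_lt (min_le_left _ _) (by norm_num)
  have hδ0 : 0 < δ := by positivity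
  have hδ1 : δ < 1 := by
    rw [hδdef, div_lt_one (by positivity)]
    nlinarith [sq_nonneg q, sq_nonneg (Crel * Cstb * q * lam), sq_nonneg Crel]
  refine ⟨μ, 1 - δ, hμ0, hμ1, by linarith, by linarith, ?_⟩
  intro H _ _ Xj φstar φj a b ηa ηb ηstar hφj ha hb hGal hpyth hcon hηa hηb hηstar hstop hst1 hst2 hst3 hrel
  -- rewrite norms via Galerkin Pythagoras
  have hGa := hGal a ha
  have hGb := hGal b hb
  have hcoef : μ + q ^ 2 * lam ^ 2 +
      δ * (2 * Crel ^ 2 + 2 * Crel ^ 2 * Cstb ^ 2 * q ^ 2 * lam ^ 2 + lam ^ 2) ≤ lam ^ 2 := by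
    have hδK : δ * K = lam ^ 2 * (1 - q ^ 2) / 2 := by
      rw [hδdef]; field_simp
    have hμle : μ ≤ lam ^ 2 * (1 - q ^ 2) / 2 := min_le_right _ _
    have : δ * (2 * Crel ^ 2 + 2 * Crel ^ 2 * Cstb ^ 2 * q ^ 2 * lam ^ 2 + lam ^ 2) = δ * K := by
      rw [hK]; ring
    rw [this, hδK]
    nlinarith
  -- reliability bound on r^2
  have hηs : ηstar ≤ ηb + Cstb * ‖φj - b‖ := by
    have := abs_le.mp hst3
    linarith [this.1]
  have hrle : ‖φstar - φj‖ ≤ Crel * (ηb + Cstb * ‖φj - b‖) := by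
    calc ‖φstar - φj‖ ≤ Crel * ηstar := hrel
    _ ≤ Crel * (ηb + Cstb * ‖φj - b‖) := by
        exact mul_le_mul_of_nonneg_left hηs hCrel.le
  have hr2 : ‖φstar - φj‖ ^ 2 ≤
      2 * Crel ^ 2 * ηb ^ 2 + 2 * Crel ^ 2 * Cstb ^ 2 * ‖φj - b‖ ^ 2 := by
    nlinarith [mul_self_le_mul_self (norm_nonneg (φstar - φj)) hrle,
      sq_nonneg (ηb - Cstb * ‖φj - b‖), sq_nonneg Crel]
  have key := stmt_18_scalar q lam Cstb Crel μ δ (‖φj - a‖) (‖φj - b‖) (‖b - a‖)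
    (‖φstar - φj‖) ηa ηb hμ0 hδ0 hδ1 hlam (norm_nonneg _) (norm_nonneg _) hηa hηb
    hpyth hcon hstop.le hr2 hcoef
  nlinarith [key]
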